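/- Let (r,ρ) ∈ 𝒩𝒞 and let M = varprojlim(M_{r,ρ}, σ_{r,ρ}). Let x ∈ M and for each positive integer j let p_j(x) ∈ M_{r,ρ} denote the j-th coordinate of x. If p_j(x) is an end-point of M_{r,ρ} for every positive integer j, then x is an end-point of M. -/

import Mathlib

/-- `(r, ρ) ∈ 𝒩𝒞`: `0 < r < 1 < ρ` and `r^k = ρ^ℓ` only for `k = ℓ = 0`. -/
def NC (r ρ : ℝ) : Prop :=
  0 < r ∧ r < 1 ∧ 1 < ρ ∧ ∀ k l : ℤ, r ^ k = ρ ^ l ↔ k = 0 ∧ l = 0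

/-- The Mahavier product `M_{r,ρ} ⊆ [0,1]^ℕ`. -/
def Mset (r ρ : ℝ) : Set (ℕ → ℝ) :=
  {x | (∀ i, x i ∈ Set.Icc (0:ℝ) 1) ∧ ∀ i, x (i + 1) = r * x i ∨ x (i + 1) = ρ * x i}

/-- The shift map `σ_{r,ρ}` on `M_{r,ρ}`. -/
def shiftM (r ρ : ℝ) (x : Mset r ρ) : Mset r ρ :=
  ⟨fun i => x.1 (i + 1), fun i => x.2.1 (i + 1), fun i => x.2.2 (i + 1)⟩

/-- The inverse limit `varprojlim(X, f)` of a single map `f : X → X`. -/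
def invLimit {X : Type*} (f : X → X) : Set (ℕ → X) :=
  {x | ∀ i, x i = f (x (i + 1))}

/-- The shift map on the inverse limit `varprojlim(X, f)`. -/
def invShift {X : Type*} (f : X → X) (x : invLimit f) : invLimit f :=
  ⟨fun i => x.1 (i + 1), fun i => x.2 (i + 1)⟩

/-- A subset `A` of a topological space is an arc if it is homeomorphic to `[0,1]`. -/
def IsArc {X : Type*} [TopologicalSpace X] (A : Set X) : Prop :=
  Nonempty (Set.Icc (0:ℝ) 1 ≃ₜ A)

/-- `x` is an end-point of the arc `A` if some homeomorphism `φ : [0,1] → A` has `φ 0 = x`. -/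
def IsEndpointOfArc {X : Type*} [TopologicalSpace X] (A : Set X) (x : X) : Prop :=
  ∃ φ : Set.Icc (0:ℝ) 1 ≃ₜ A, ((φ ⟨0, by norm_num⟩ : A) : X) = x

/-- `x` is an end-point of the space `X` if it is an end-point of every arc in `X`
containing it. -/
def IsEndpoint {X : Type*} [TopologicalSpace X] (x : X) : Prop :=
  ∀ A : Set X, IsArc A → x ∈ A → IsEndpointOfArc A x

/-- A continuous injective image of `[0,1]` has no endpoint at an interior parameter. -/
lemma arcNE {X : Type*} [TopologicalSpace X] [T2Space X]
    (f : Set.Icc (0:ℝ) 1 → X) (hc : Continuous f) (hi : Function.Injective f)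
    (t0 : Set.Icc (0:ℝ) 1) (h0 : 0 < (t0:ℝ)) (h1 : (t0:ℝ) < 1) :
    ¬ IsEndpoint (f t0) := by
  intro hend
  set A : Set X := Set.range f with hA
  have hf' : Continuous (fun t => (⟨f t, Set.mem_range_self t⟩ : A)) :=
    hc.subtype_mk _
  have hbij : Function.Bijective (fun t => (⟨f t, Set.mem_range_self t⟩ : A)) := by
    constructor
    · intro a b hab
      exact hi (congrArg Subtype.val hab)
    · rintro ⟨y, t, rfl⟩
      exact ⟨t, rfl⟩
  let e : Set.Icc (0:ℝ) 1 ≃ A := Equiv.ofBijective _ hbij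
  have he : Continuous e := hf'
  let φ : Set.Icc (0:ℝ) 1 ≃ₜ A := he.homeoOfEquivCompactToT2
  obtain ⟨ψ, hψ⟩ := hend A ⟨φ⟩ (Set.mem_range_self t0)
  -- c : Icc ≃ₜ Icc with c t0 = 0
  have hφt0 : ((φ t0 : A) : X) = f t0 := rfl
  have hψ0 : ψ ⟨0, by norm_num⟩ = φ t0 := by
    apply Subtype.ext; rw [hψ, hφt0]
  let c : Set.Icc (0:ℝ) 1 ≃ₜ Set.Icc (0:ℝ) 1 := φ.trans ψ.symm
  have hct0 : c t0 = ⟨0, by norm_num⟩ := by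
    show ψ.symm (φ t0) = _
    rw [← hψ0]; exact ψ.symm_apply_apply _
  -- real-valued version
  set G : ℝ → ℝ := fun s => (c (Set.projIcc 0 1 zero_le_one s) : ℝ) with hGdef
  have hGc : Continuous G :=
    continuous_subtype_val.comp (c.continuous.comp continuous_projIcc)
  have hGinj : ∀ s ∈ Set.Icc (0:ℝ) 1, ∀ s' ∈ Set.Icc (0:ℝ) 1, G s = G s' → s = s' := by
    intro s hs s' hs' hG
    have : c (Set.projIcc 0 1 zero_le_one s) = c (Set.projIcc 0 1 zero_le_one s') :=
      Subtype.ext hG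
    have := c.injective this
    rw [Set.projIcc_of_mem _ hs, Set.projIcc_of_mem _ hs'] at this
    exact congrArg Subtype.val this
  have ht0mem : (t0:ℝ) ∈ Set.Icc (0:ℝ) 1 := t0.2
  have hGt0 : G t0 = 0 := by
    rw [hGdef]; simp only
    rw [Set.projIcc_of_mem _ ht0mem]
    rw [show (⟨(t0:ℝ), ht0mem⟩ : Set.Icc (0:ℝ) 1) = t0 from rfl, hct0]
  have h0mem : (0:ℝ) ∈ Set.Icc (0:ℝ) 1 := by norm_num
  have h1mem : (1:ℝ) ∈ Set.Icc (0:ℝ) 1 := by norm_num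
  have hG0nonneg : 0 ≤ G 0 := by
    rw [hGdef]; exact (c _).2.1
  have hG1nonneg : 0 ≤ G 1 := by
    rw [hGdef]; exact (c _).2.1
  have hG0 : 0 < G 0 := by
    rcases hG0nonneg.lt_or_eq with h | h
    · exact h
    · exfalso
      have := hGinj 0 h0mem t0 ht0mem (by rw [hGt0, ← h])
      exact absurd this.symm (ne_of_gt h0)
  have hG1 : 0 < G 1 := by
    rcases hG1nonneg.lt_or_eq with h | h
    · exact h
    · exfalso
      have := hGinj 1 h1mem t0 ht0mem (by rw [hGt0, ← h])
      exact absurd this (ne_of_gt h1)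
  set m : ℝ := min (G 0) (G 1) / 2 with hm
  have hmpos : 0 < m := by positivity
  have hm0 : m < G 0 := by
    have : min (G 0) (G 1) ≤ G 0 := min_le_left _ _
    nlinarith [lt_min hG0 hG1]
  have hm1 : m < G 1 := by
    have : min (G 0) (G 1) ≤ G 1 := min_le_right _ _
    nlinarith [lt_min hG0 hG1]
  obtain ⟨s1, hs1mem, hs1⟩ : ∃ s1 ∈ Set.Icc (0:ℝ) (t0:ℝ), G s1 = m := by
    have hiv := intermediate_value_Icc' (α := ℝ) (δ := ℝ) (a := 0) (b := (t0:ℝ))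
      (le_of_lt h0) (f := G) hGc.continuousOn
    have hmmem : m ∈ Set.Icc (G t0) (G 0) := ⟨by rw [hGt0]; exact hmpos.le, hm0.le⟩
    exact hiv hmmem
  obtain ⟨s2, hs2mem, hs2⟩ : ∃ s2 ∈ Set.Icc (t0:ℝ) 1, G s2 = m := by
    have hiv := intermediate_value_Icc (α := ℝ) (δ := ℝ) (a := (t0:ℝ)) (b := 1)
      (le_of_lt h1) (f := G) hGc.continuousOn
    have hmmem : m ∈ Set.Icc (G t0) (G 1) := ⟨by rw [hGt0]; exact hmpos.le, hm1.le⟩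
    exact hiv hmmem
  have hs1mem' : s1 ∈ Set.Icc (0:ℝ) 1 := ⟨hs1mem.1, hs1mem.2.trans h1.le⟩
  have hs2mem' : s2 ∈ Set.Icc (0:ℝ) 1 := ⟨h0.le.trans hs2mem.1, hs2mem.2⟩
  have h12 : s1 = s2 := hGinj s1 hs1mem' s2 hs2mem' (by rw [hs1, hs2])
  have hne1 : s1 ≠ (t0:ℝ) := by
    intro h; rw [h, hGt0] at hs1; exact absurd hs1.symm (ne_of_gt hmpos)
  have hne2 : s2 ≠ (t0:ℝ) := by
    intro h; rw [h, hGt0] at hs2; exact absurd hs2.symm (ne_of_gt hmpos)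
  have hl1 : s1 < (t0:ℝ) := lt_of_le_of_ne hs1mem.2 hne1
  have hl2 : (t0:ℝ) < s2 := lt_of_le_of_ne hs2mem.1 (Ne.symm hne2)
  rw [h12] at hl1
  linarith

section helpers
variable {r ρ : ℝ}

lemma mset_nonneg (w : Mset r ρ) (i : ℕ) : 0 ≤ w.1 i := (w.2.1 i).1
lemma mset_le_one (w : Mset r ρ) (i : ℕ) : w.1 i ≤ 1 := (w.2.1 i).2

lemma mset_zero (hr0 : 0 < r) (hρ0 : 0 < ρ) (w : Mset r ρ) (h : w.1 0 = 0) :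
    ∀ i, w.1 i = 0 := by
  intro i
  induction i with
  | zero => exact h
  | succ n ih => rcases w.2.2 n with h' | h' <;> rw [h', ih, mul_zero]

lemma mset_pos (hr0 : 0 < r) (hρ0 : 0 < ρ) (w : Mset r ρ) (h : 0 < w.1 0) :
    ∀ i, 0 < w.1 i := by
  intro i
  induction i with
  | zero => exact h
  | succ n ih => rcases w.2.2 n with h' | h' <;> rw [h'] <;> positivity

lemma mset_pos_zero (hr0 : 0 < r) (hρ0 : 0 < ρ) (w : Mset r ρ) {i : ℕ} (h : 0 < w.1 i) :
    0 < w.1 0 := by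
  rcases (mset_nonneg w 0).lt_or_eq with h0 | h0
  · exact h0
  · exact absurd (mset_zero hr0 hρ0 w h0.symm i) (ne_of_gt h)

end helpers

section notend
variable {r ρ : ℝ}

/-- The zero point of `Mset` is not an endpoint. -/
lemma vertex_not_endpoint (hr0 : 0 < r) (hr1 : r < 1) (hρ1 : 1 < ρ)
    (w : Mset r ρ) (hw : ∀ i, w.1 i = 0) : ¬ IsEndpoint w := by
  have hρ0 : 0 < ρ := lt_trans one_pos hρ1
  set c : ℕ → ℝ := fun i => match i with
    | 0 => ρ⁻¹
    | (n+1) => r^n with hc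
  have hc0 : c 0 = ρ⁻¹ := rfl
  have hcs : ∀ n, c (n+1) = r^n := fun n => rfl
  have hcpos : ∀ i, 0 < c i := by
    intro i; cases i with
    | zero => rw [hc0]; positivity
    | succ n => rw [hcs]; positivity
  have hcle : ∀ i, c i ≤ 1 := by
    intro i; cases i with
    | zero => rw [hc0]; rw [inv_le_one_iff₀]; right; exact hρ1.le
    | succ n => rw [hcs]; exact pow_le_one₀ hr0.le hr1.le
  -- the map
  set F : Set.Icc (0:ℝ) 1 → (ℕ → ℝ) :=
    fun s i => (max (1 - 2*(s:ℝ)) 0) * r^i + (max (2*(s:ℝ) - 1) 0) * c i with hF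
  have hFmem : ∀ s, F s ∈ Mset r ρ := by
    intro s
    obtain ⟨hs0, hs1⟩ := s.2
    constructor
    · intro i
      constructor
      · have : (0:ℝ) ≤ (max (1 - 2*(s:ℝ)) 0) * r^i := by positivity
        have : (0:ℝ) ≤ (max (2*(s:ℝ) - 1) 0) * c i := by
          have := (hcpos i).le; positivity
        simp only [hF]; positivity
      · simp only [hF]
        rcases le_total (s:ℝ) (1/2) with h | h
        · have h2 : max (2*(s:ℝ) - 1) 0 = 0 := max_eq_right (by linarith)
          rw [h2, zero_mul, add_zero]
          have : max (1 - 2*(s:ℝ)) 0 ≤ 1 := by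
            apply max_le (by linarith) zero_le_one
          calc (max (1 - 2*(s:ℝ)) 0) * r^i ≤ 1 * 1 :=
                mul_le_mul this (pow_le_one₀ hr0.le hr1.le) (by positivity) zero_le_one
            _ = 1 := by ring
        · have h2 : max (1 - 2*(s:ℝ)) 0 = 0 := max_eq_right (by linarith)
          rw [h2, zero_mul, zero_add]
          have : max (2*(s:ℝ) - 1) 0 ≤ 1 := by
            apply max_le (by linarith) zero_le_one
          calc (max (2*(s:ℝ) - 1) 0) * c i ≤ 1 * 1 :=
                mul_le_mul this (hcle i) (hcpos i).le zero_le_one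
            _ = 1 := by ring
    · intro i
      rcases le_total (s:ℝ) (1/2) with h | h
      · left
        have h2 : max (2*(s:ℝ) - 1) 0 = 0 := max_eq_right (by linarith)
        simp only [hF, h2, zero_mul, add_zero]
        ring
      · have h2 : max (1 - 2*(s:ℝ)) 0 = 0 := max_eq_right (by linarith)
        cases i with
        | zero =>
          right
          simp only [hF, h2, zero_mul, zero_add, hcs, hc0, pow_zero]
          field_simp
        | succ n =>
          left
          simp only [hF, h2, zero_mul, zero_add, hcs]
          ring
  set f : Set.Icc (0:ℝ) 1 → Mset r ρ := fun s => ⟨F s, hFmem s⟩ with hf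
  have hfc : Continuous f := by
    apply Continuous.subtype_mk
    apply continuous_pi
    intro i
    simp only [hF]
    fun_prop
  have hfinj : Function.Injective f := by
    intro s s' hss
    have hFe : F s = F s' := congrArg Subtype.val hss
    have e0 := congrFun hFe 0
    have e1 := congrFun hFe 1
    simp only [hF, pow_zero, pow_one, hc0, hcs] at e0 e1
    set m1 := max (1 - 2*(s:ℝ)) 0
    set m2 := max (2*(s:ℝ) - 1) 0
    set n1 := max (1 - 2*(s':ℝ)) 0
    set n2 := max (2*(s':ℝ) - 1) 0
    -- e0 : m1 * 1 + m2 * ρ⁻¹ = n1 * 1 + n2 * ρ⁻¹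
    -- e1 : m1 * r + m2 * r^0 = n1 * r + n2 * r^0
    have hρne : ρ ≠ 0 := ne_of_gt hρ0
    have key : m2 = n2 := by
      have h1 : (m1 - n1) * ρ + (m2 - n2) = 0 := by
        field_simp at e0
        nlinarith [e0]
      have h2 : (m1 - n1) * r + (m2 - n2) * 1 = 0 := by nlinarith [e1]
      -- subtract: (m1-n1)(ρ - r) = 0
      have h3 : (m1 - n1) * (ρ - r) = 0 := by nlinarith
      have h4 : m1 = n1 := by
        rcases mul_eq_zero.1 h3 with h | h
        · linarith
        · exfalso; linarith
      nlinarith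
    have hm : 2*(s:ℝ) - 1 = m2 - m1 := by
      have := max_zero_sub_max_neg_zero_eq_self (2*(s:ℝ) - 1)
      simp only [neg_sub] at this
      simp only [m1, m2]
      linarith [this]
    have hn : 2*(s':ℝ) - 1 = n2 - n1 := by
      have := max_zero_sub_max_neg_zero_eq_self (2*(s':ℝ) - 1)
      simp only [neg_sub] at this
      simp only [n1, n2]
      linarith [this]
    have key1 : m1 = n1 := by
      have h1 : (m1 - n1) * ρ + (m2 - n2) = 0 := by
        field_simp at e0
        nlinarith [e0]
      rw [key] at h1
      have : (m1 - n1) * ρ = 0 := by linarith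
      rcases mul_eq_zero.1 this with h | h
      · linarith
      · exact absurd h hρne
    apply Subtype.ext
    have : 2*(s:ℝ) - 1 = 2*(s':ℝ) - 1 := by rw [hm, hn, key, key1]
    linarith
  have hmid : (0:ℝ) < (1/2 : ℝ) ∧ (1/2:ℝ) < 1 := by norm_num
  have hmem : (1/2:ℝ) ∈ Set.Icc (0:ℝ) 1 := by norm_num
  have hfw : f ⟨1/2, hmem⟩ = w := by
    apply Subtype.ext
    funext i
    simp only [hf, hF, hw i]
    norm_num
  have := arcNE f hfc hfinj ⟨1/2, hmem⟩ hmid.1 hmid.2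
  rw [hfw] at this
  exact this

/-- A point of `Mset` with positive first coordinate and coords bounded away
from 1 is not an endpoint. -/
lemma leg_not_endpoint (hr0 : 0 < r) (hρ0 : 0 < ρ)
    (w : Mset r ρ) (hw0 : 0 < w.1 0) {ε : ℝ} (hε0 : 0 < ε) (hε1 : ε < 1)
    (hb : ∀ i, w.1 i ≤ 1 - ε) : ¬ IsEndpoint w := by
  set k : ℝ := (1 - ε)⁻¹ - 1/2 with hk
  clear_value k
  have h1ε : (0:ℝ) < 1 - ε := by linarith
  have hinv : 1 < (1-ε)⁻¹ := by
    rw [lt_inv_comm₀] <;> simp <;> linarith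
  have hkpos : 1/2 < k := by rw [hk]; linarith
  set F : Set.Icc (0:ℝ) 1 → (ℕ → ℝ) := fun s i => (1/2 + (s:ℝ) * k) * w.1 i with hF
  have hcoef : ∀ s : Set.Icc (0:ℝ) 1, 1/2 ≤ 1/2 + (s:ℝ)*k ∧ 1/2 + (s:ℝ)*k ≤ (1-ε)⁻¹ := by
    intro s
    obtain ⟨hs0, hs1⟩ := s.2
    constructor
    · nlinarith
    · nlinarith
  have hFmem : ∀ s, F s ∈ Mset r ρ := by
    intro s
    obtain ⟨hco1, hco2⟩ := hcoef s
    constructor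
    · intro i
      constructor
      · simp only [hF]
        have := mset_nonneg w i
        nlinarith
      · simp only [hF]
        have h1 := hb i
        have h2 := mset_nonneg w i
        calc (1/2 + (s:ℝ)*k) * w.1 i ≤ (1-ε)⁻¹ * (1-ε) := by nlinarith
          _ = 1 := by field_simp
    · intro i
      rcases w.2.2 i with h | h
      · left; simp only [hF, h]; ring
      · right; simp only [hF, h]; ring
  set f : Set.Icc (0:ℝ) 1 → Mset r ρ := fun s => ⟨F s, hFmem s⟩ with hf
  have hfc : Continuous f := by
    apply Continuous.subtype_mk
    apply continuous_pi
    intro i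
    simp only [hF]
    fun_prop
  have hkpos0 : (0:ℝ) < k := by linarith
  have hfinj : Function.Injective f := by
    intro s s' hss
    have hFe := congrFun (congrArg Subtype.val hss) 0
    simp only [hf, hF] at hFe
    have h2 : (s:ℝ) * (k * w.1 0) = (s':ℝ) * (k * w.1 0) := by linear_combination hFe
    have h3 : (s:ℝ) = (s':ℝ) := mul_right_cancel₀ (ne_of_gt (mul_pos hkpos0 hw0)) h2
    exact Subtype.ext h3
  set s0 : ℝ := 1/(2*k) with hs0
  clear_value s0
  have hs0pos : 0 < s0 := by rw [hs0]; positivity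
  have hs0lt : s0 < 1 := by
    rw [hs0]
    rw [div_lt_one (by linarith : (0:ℝ) < 2*k)]
    linarith
  have hmem : s0 ∈ Set.Icc (0:ℝ) 1 := ⟨hs0pos.le, hs0lt.le⟩
  have hfw : f ⟨s0, hmem⟩ = w := by
    apply Subtype.ext
    funext i
    simp only [hf, hF]
    have : (1/2 + s0 * k) = 1 := by
      rw [hs0]; field_simp; ring
    rw [this, one_mul]
  have := arcNE f hfc hfinj ⟨s0, hmem⟩ hs0pos hs0lt
  rw [hfw] at this
  exact this

end notend

section invhelp
variable {r ρ : ℝ}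

lemma row_shift (z : invLimit (shiftM r ρ)) (j i : ℕ) :
    (z.1 j).1 i = (z.1 (j+1)).1 (i+1) := by
  have h : z.1 j = shiftM r ρ (z.1 (j+1)) := z.2 j
  rw [h]; rfl

lemma entry_shift (z : invLimit (shiftM r ρ)) (m j i : ℕ) :
    (z.1 j).1 i = (z.1 (j+m)).1 (i+m) := by
  induction m with
  | zero => rfl
  | succ n ih => rw [ih]; exact row_shift z _ _

lemma inv_pos_all (hr0 : 0 < r) (hρ0 : 0 < ρ) (z : invLimit (shiftM r ρ))
    (h : 0 < (z.1 0).1 0) : ∀ j i, 0 < (z.1 j).1 i := by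
  intro j i
  have hdiag : 0 < (z.1 j).1 j := by
    have e : (z.1 0).1 0 = (z.1 j).1 j := by simpa using entry_shift z j 0 0
    rwa [e] at h
  have h0 : 0 < (z.1 j).1 0 := mset_pos_zero hr0 hρ0 _ hdiag
  exact mset_pos hr0 hρ0 _ h0 i

lemma inv_ext (z z' : invLimit (shiftM r ρ))
    (h0 : ∀ i, (z.1 0).1 i = (z'.1 0).1 i)
    (hc : ∀ j, (z.1 j).1 0 = (z'.1 j).1 0) : z = z' := by
  apply Subtype.ext; funext j; apply Subtype.ext; funext i
  show (z.1 j).1 i = (z'.1 j).1 i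
  rcases le_total i j with h | h
  · have e := entry_shift z i (j-i) 0
    have e' := entry_shift z' i (j-i) 0
    rw [Nat.sub_add_cancel h, Nat.zero_add] at e e'
    rw [← e, ← e', hc]
  · have e := entry_shift z j 0 (i-j)
    have e' := entry_shift z' j 0 (i-j)
    rw [Nat.zero_add, Nat.sub_add_cancel h] at e e'
    rw [← e, ← e', h0]

lemma coord_cont (j i : ℕ) :
    Continuous (fun z : invLimit (shiftM r ρ) => (z.1 j).1 i) := by
  have h1 : Continuous (fun z : invLimit (shiftM r ρ) => z.1 j) :=
    (continuous_apply j).comp continuous_subtype_val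
  exact ((continuous_apply i).comp continuous_subtype_val).comp h1

end invhelp

/-- If every coordinate projection `p_j(x) ∈ M_{r,ρ}` of a point
`x ∈ M = varprojlim(M_{r,ρ}, σ_{r,ρ})` is an end-point of `M_{r,ρ}`, then `x` is an
end-point of `M`. -/
theorem stmt14 (r ρ : ℝ) (h : NC r ρ) (x : invLimit (shiftM r ρ))
    (hx : ∀ j : ℕ, IsEndpoint (x.1 j)) :
    IsEndpoint x := by
  obtain ⟨hr0, hr1, hρ1, -⟩ := h
  have hρ0 : 0 < ρ := lt_trans one_pos hρ1
  have hrρ : r < ρ := lt_trans hr1 hρ1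
  -- Step A: the 0-th projection has positive first coordinate and sup of coords = 1
  have hw0 : 0 < (x.1 0).1 0 := by
    by_contra hcon
    push_neg at hcon
    have h0 : (x.1 0).1 0 = 0 := le_antisymm hcon (mset_nonneg _ 0)
    exact vertex_not_endpoint hr0 hr1 hρ1 (x.1 0) (mset_zero hr0 hρ0 _ h0) (hx 0)
  have hsup : ∀ ε : ℝ, 0 < ε → ∃ i, 1 - ε < (x.1 0).1 i := by
    intro ε hε
    by_contra hcon
    push_neg at hcon
    rcases lt_or_ge ε 1 with hε1 | hε1
    · exact leg_not_endpoint hr0 hρ0 (x.1 0) hw0 hε hε1 hcon (hx 0)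
    · have := hcon 0; linarith
  -- Now the main argument
  intro A hA hxA
  obtain ⟨φ⟩ := hA
  set t0 : Set.Icc (0:ℝ) 1 := φ.symm ⟨x, hxA⟩ with ht0
  have hφt0 : ((φ t0 : A) : invLimit (shiftM r ρ)) = x := by
    rw [ht0, φ.apply_symm_apply]
  obtain ⟨ht00, ht01⟩ := t0.2
  rcases ht00.lt_or_eq with h0lt | h0eq
  swap
  · -- t0 = 0 : φ itself works
    refine ⟨φ, ?_⟩
    have he : (⟨0, by norm_num⟩ : Set.Icc (0:ℝ) 1) = t0 := Subtype.ext h0eq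
    rw [he, hφt0]
  rcases ht01.lt_or_eq with h1lt | h1eq
  swap
  · -- t0 = 1 : compose with the reflection of the interval
    refine ⟨(unitInterval.symmHomeomorph).trans φ, ?_⟩
    have hσ : unitInterval.symmHomeomorph (⟨0, by norm_num⟩ : Set.Icc (0:ℝ) 1) = t0 := by
      apply Subtype.ext
      show ((unitInterval.symm 0 : unitInterval) : ℝ) = (t0 : ℝ)
      rw [unitInterval.symm_zero]
      exact h1eq.symm
    show ((φ (unitInterval.symmHomeomorph ⟨0, by norm_num⟩) : A) : invLimit (shiftM r ρ)) = x
    rw [hσ, hφt0]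
  -- interior case: derive a contradiction
  exfalso
  set ξ : ℝ → invLimit (shiftM r ρ) :=
    fun s => ((φ (Set.projIcc 0 1 zero_le_one s) : A) : invLimit (shiftM r ρ)) with hξdef
  have hξc : Continuous ξ :=
    continuous_subtype_val.comp (φ.continuous.comp continuous_projIcc)
  have hξt0 : ξ (t0:ℝ) = x := by
    rw [hξdef]
    simp only
    rw [Set.projIcc_of_mem _ t0.2, Subtype.coe_eta, hφt0]
  set G : ℝ → ℝ := fun s => ((ξ s).1 0).1 0 with hGdef
  have hGc : Continuous G := (coord_cont 0 0).comp hξc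
  have hGt0 : G (t0:ℝ) = (x.1 0).1 0 := by rw [hGdef]; simp only [hξt0]
  -- choose the window [a, b] around t0
  have hU : IsOpen (G ⁻¹' Set.Ioi 0) := isOpen_Ioi.preimage hGc
  have ht0U : (t0:ℝ) ∈ G ⁻¹' Set.Ioi 0 := by
    simp only [Set.mem_preimage, Set.mem_Ioi, hGt0]; exact hw0
  obtain ⟨εb, hεb, hball⟩ := Metric.isOpen_iff.1 hU _ ht0U
  set δ : ℝ := min (εb/2) (min (t0:ℝ) (1 - (t0:ℝ))) with hδdef
  have hδpos : 0 < δ := lt_min (by linarith) (lt_min h0lt (by linarith))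
  have hδε : δ ≤ εb/2 := min_le_left _ _
  have hδt0 : δ ≤ (t0:ℝ) := (min_le_right _ _).trans (min_le_left _ _)
  have hδ1 : δ ≤ 1 - (t0:ℝ) := (min_le_right _ _).trans (min_le_right _ _)
  set a : ℝ := (t0:ℝ) - δ with hadef
  set b : ℝ := (t0:ℝ) + δ with hbdef
  have hab01 : ∀ s ∈ Set.Icc a b, s ∈ Set.Icc (0:ℝ) 1 := by
    intro s hs
    exact ⟨by linarith [hs.1], by linarith [hs.2]⟩
  have ht0ab : (t0:ℝ) ∈ Set.Icc a b := ⟨by linarith, by linarith⟩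
  have haab : a ∈ Set.Icc a b := ⟨le_refl _, by linarith⟩
  have hbab : b ∈ Set.Icc a b := ⟨by linarith, le_refl _⟩
  have hGpos : ∀ s ∈ Set.Icc a b, 0 < G s := by
    intro s hs
    apply hball
    rw [Metric.mem_ball, Real.dist_eq]
    have h1 : |s - (t0:ℝ)| ≤ δ := abs_le.2 ⟨by linarith [hs.1], by linarith [hs.2]⟩
    linarith
  have hpos : ∀ s ∈ Set.Icc a b, ∀ j i, 0 < ((ξ s).1 j).1 i := by
    intro s hs
    exact inv_pos_all hr0 hρ0 _ (hGpos s hs)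
  -- symbol constancy machine
  have hconst : ∀ P Q : ℝ → ℝ, ContinuousOn P (Set.Icc a b) → ContinuousOn Q (Set.Icc a b) →
      (∀ s ∈ Set.Icc a b, 0 < Q s) →
      (∀ s ∈ Set.Icc a b, P s = r * Q s ∨ P s = ρ * Q s) →
      ∀ s ∈ Set.Icc a b, ∀ s' ∈ Set.Icc a b, P s * Q s' = P s' * Q s := by
    intro P Q hP hQ hQpos hPQ s hs s' hs'
    set k : ℝ → ℝ := fun u => P u / Q u with hkdef
    have hkc : ContinuousOn k (Set.Icc a b) :=
      hP.div hQ (fun u hu => ne_of_gt (hQpos u hu))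
    have hkval : ∀ u ∈ Set.Icc a b, k u = r ∨ k u = ρ := by
      intro u hu
      rcases hPQ u hu with h | h
      · left; rw [hkdef]; simp only
        rw [h, mul_div_assoc, div_self (ne_of_gt (hQpos u hu)), mul_one]
      · right; rw [hkdef]; simp only
        rw [h, mul_div_assoc, div_self (ne_of_gt (hQpos u hu)), mul_one]
    have hkeq : k s = k s' := by
      by_contra hne
      have hmid : (r + ρ)/2 ∈ Set.uIcc (k s) (k s') := by
        rcases hkval s hs with h | h <;> rcases hkval s' hs' with h' | h'
        · rw [h, h'] at hne; exact absurd rfl hne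
        · rw [h, h', Set.uIcc_of_le (by linarith)]
          exact ⟨by linarith, by linarith⟩
        · rw [h, h', Set.uIcc_of_ge (by linarith)]
          exact ⟨by linarith, by linarith⟩
        · rw [h, h'] at hne; exact absurd rfl hne
      have hsub : Set.uIcc s s' ⊆ Set.Icc a b := Set.uIcc_subset_Icc hs hs'
      obtain ⟨u, hu, hku⟩ := intermediate_value_uIcc (hkc.mono hsub) hmid
      rcases hkval u (hsub hu) with h | h <;> rw [h] at hku <;> linarith
    have h1 : P s = k s * Q s := (div_mul_cancel₀ (P s) (ne_of_gt (hQpos s hs))).symm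
    have h2 : P s' = k s' * Q s' := (div_mul_cancel₀ (P s') (ne_of_gt (hQpos s' hs'))).symm
    rw [h1, h2, hkeq]; ring
  -- row identity
  have hrow : ∀ i : ℕ, ∀ s ∈ Set.Icc a b,
      ((ξ s).1 0).1 i * G (t0:ℝ) = G s * ((ξ (t0:ℝ)).1 0).1 i := by
    intro i
    induction i with
    | zero =>
      intro s hs
      rfl
    | succ i ih =>
      have hP : ContinuousOn (fun s => ((ξ s).1 0).1 (i+1)) (Set.Icc a b) :=
        ((coord_cont 0 (i+1)).comp hξc).continuousOn
      have hQ : ContinuousOn (fun s => ((ξ s).1 0).1 i) (Set.Icc a b) :=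
        ((coord_cont 0 i).comp hξc).continuousOn
      have hQpos : ∀ s ∈ Set.Icc a b, 0 < ((ξ s).1 0).1 i := fun s hs => hpos s hs 0 i
      have hrel : ∀ s ∈ Set.Icc a b,
          ((ξ s).1 0).1 (i+1) = r * ((ξ s).1 0).1 i ∨
          ((ξ s).1 0).1 (i+1) = ρ * ((ξ s).1 0).1 i := by
        intro s hs
        exact ((ξ s).1 0).2.2 i
      have hcc := hconst _ _ hP hQ hQpos hrel
      intro s hs
      have h1 := hcc s hs (t0:ℝ) ht0ab
      have h2 := ih s hs
      have hWt0i : 0 < ((ξ (t0:ℝ)).1 0).1 i := hpos _ ht0ab 0 i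
      apply mul_right_cancel₀ (ne_of_gt hWt0i)
      linear_combination G (t0:ℝ) * h1 + ((ξ (t0:ℝ)).1 0).1 (i+1) * h2
  -- column identity
  have hcol : ∀ j : ℕ, ∀ s ∈ Set.Icc a b,
      ((ξ s).1 j).1 0 * G (t0:ℝ) = G s * ((ξ (t0:ℝ)).1 j).1 0 := by
    intro j
    induction j with
    | zero =>
      intro s hs
      rfl
    | succ j ih =>
      have hP : ContinuousOn (fun s => ((ξ s).1 (j+1)).1 1) (Set.Icc a b) :=
        ((coord_cont (j+1) 1).comp hξc).continuousOn
      have hQ : ContinuousOn (fun s => ((ξ s).1 (j+1)).1 0) (Set.Icc a b) :=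
        ((coord_cont (j+1) 0).comp hξc).continuousOn
      have hQpos : ∀ s ∈ Set.Icc a b, 0 < ((ξ s).1 (j+1)).1 0 :=
        fun s hs => hpos s hs (j+1) 0
      have hrel : ∀ s ∈ Set.Icc a b,
          ((ξ s).1 (j+1)).1 1 = r * ((ξ s).1 (j+1)).1 0 ∨
          ((ξ s).1 (j+1)).1 1 = ρ * ((ξ s).1 (j+1)).1 0 := by
        intro s hs
        exact ((ξ s).1 (j+1)).2.2 0
      have hcc := hconst _ _ hP hQ hQpos hrel
      intro s hs
      have h1 := hcc s hs (t0:ℝ) ht0ab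
      have h2 : ((ξ s).1 (j+1)).1 1 * G (t0:ℝ) = G s * ((ξ (t0:ℝ)).1 (j+1)).1 1 := by
        have es := row_shift (ξ s) j 0
        have et := row_shift (ξ (t0:ℝ)) j 0
        rw [← es, ← et]
        exact ih s hs
      have hPt0 : 0 < ((ξ (t0:ℝ)).1 (j+1)).1 1 := hpos _ ht0ab (j+1) 1
      apply mul_right_cancel₀ (ne_of_gt hPt0)
      linear_combination (- G (t0:ℝ)) * h1 + ((ξ (t0:ℝ)).1 (j+1)).1 0 * h2
  have hGt0pos : 0 < G (t0:ℝ) := hGpos _ ht0ab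
  -- injectivity of G on [a,b]
  have hGinj : ∀ s ∈ Set.Icc a b, ∀ s' ∈ Set.Icc a b, G s = G s' → s = s' := by
    intro s hs s' hs' hGe
    have hξe : ξ s = ξ s' := by
      apply inv_ext
      · intro i
        have h1 := hrow i s hs
        have h2 := hrow i s' hs'
        rw [hGe] at h1
        have := h1.trans h2.symm
        exact mul_right_cancel₀ (ne_of_gt hGt0pos) this
      · intro j
        have h1 := hcol j s hs
        have h2 := hcol j s' hs'
        rw [hGe] at h1
        have := h1.trans h2.symm
        exact mul_right_cancel₀ (ne_of_gt hGt0pos) this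
    have hφe : φ (Set.projIcc 0 1 zero_le_one s) = φ (Set.projIcc 0 1 zero_le_one s') :=
      Subtype.ext hξe
    have := φ.injective hφe
    rw [Set.projIcc_of_mem _ (hab01 s hs), Set.projIcc_of_mem _ (hab01 s' hs')] at this
    exact congrArg Subtype.val this
  -- find a point with larger G-value
  obtain ⟨sbig, hsbigmem, hsbig⟩ : ∃ s ∈ Set.Icc a b, G (t0:ℝ) < G s := by
    by_contra hno
    push_neg at hno
    have hane : a ≠ (t0:ℝ) := by intro h; rw [hadef] at h; linarith [hδpos]
    have hbne : b ≠ (t0:ℝ) := by intro h; rw [hbdef] at h; linarith [hδpos]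
    have hGa : G a < G (t0:ℝ) :=
      (hno a haab).lt_of_ne (fun h => hane (hGinj a haab (t0:ℝ) ht0ab h))
    have hGb : G b < G (t0:ℝ) :=
      (hno b hbab).lt_of_ne (fun h => hbne (hGinj b hbab (t0:ℝ) ht0ab h))
    set m' : ℝ := (max (G a) (G b) + G (t0:ℝ))/2 with hm'
    have hmax : max (G a) (G b) < G (t0:ℝ) := max_lt hGa hGb
    have hm'a : G a ≤ m' := by
      have := le_max_left (G a) (G b); rw [hm']; linarith
    have hm'b : G b ≤ m' := by
      have := le_max_right (G a) (G b); rw [hm']; linarith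
    have hm't : m' < G (t0:ℝ) := by rw [hm']; linarith
    obtain ⟨s1, hs1mem, hs1⟩ : ∃ s1 ∈ Set.Icc a (t0:ℝ), G s1 = m' := by
      have hiv := intermediate_value_Icc (α := ℝ) (δ := ℝ) (a := a) (b := (t0:ℝ))
        (by linarith : a ≤ (t0:ℝ)) (f := G) hGc.continuousOn
      exact hiv ⟨hm'a, hm't.le⟩
    obtain ⟨s2, hs2mem, hs2⟩ : ∃ s2 ∈ Set.Icc (t0:ℝ) b, G s2 = m' := by
      have hiv := intermediate_value_Icc' (α := ℝ) (δ := ℝ) (a := (t0:ℝ)) (b := b)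
        (by linarith : (t0:ℝ) ≤ b) (f := G) hGc.continuousOn
      exact hiv ⟨hm'b, hm't.le⟩
    have hs1ab : s1 ∈ Set.Icc a b := ⟨hs1mem.1, by linarith [hs1mem.2]⟩
    have hs2ab : s2 ∈ Set.Icc a b := ⟨by linarith [hs2mem.1], hs2mem.2⟩
    have h12 : s1 = s2 := hGinj s1 hs1ab s2 hs2ab (by rw [hs1, hs2])
    have hne1 : s1 ≠ (t0:ℝ) := by
      intro h; rw [h] at hs1; linarith
    have hne2 : s2 ≠ (t0:ℝ) := by
      intro h; rw [h] at hs2; linarith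
    have hl1 : s1 < (t0:ℝ) := lt_of_le_of_ne hs1mem.2 hne1
    have hl2 : (t0:ℝ) < s2 := lt_of_le_of_ne hs2mem.1 (Ne.symm hne2)
    rw [h12] at hl1
    linarith
  -- final contradiction using hsup
  have hGsbigpos : 0 < G sbig := hGpos _ hsbigmem
  have hratio : G (t0:ℝ) / G sbig < 1 := (div_lt_one hGsbigpos).2 hsbig
  obtain ⟨i, hi⟩ := hsup (1 - G (t0:ℝ) / G sbig) (by linarith)
  have hi' : G (t0:ℝ) / G sbig < (x.1 0).1 i := by linarith
  have hxi : ((ξ (t0:ℝ)).1 0).1 i = (x.1 0).1 i := by rw [hξt0]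
  have hW := hrow i sbig hsbigmem
  rw [hxi] at hW
  have hle := mset_le_one ((ξ sbig).1 0) i
  have hgt : G (t0:ℝ) < G sbig * (x.1 0).1 i := by
    rw [div_lt_iff₀ hGsbigpos] at hi'
    linarith [mul_comm (G sbig) ((x.1 0).1 i)]
  nlinarith [hW, hle, hgt, hGt0pos]
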